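/- If EJ α t ≠ 0 for some t, then the number of nonzero letters in α is even, and moreover every nonzero letter appears in α an even number of times. -/

import Mathlib

open intervalIntegral

noncomputable def EJrev : List ℕ → ℝ → ℝ
  | [], _ => 1
  | [a], t => if a = 0 then ∫ s in (0:ℝ)..t, EJrev [] s else 0
  | a :: b :: rest, t =>
      if a = 0 then ∫ s in (0:ℝ)..t, EJrev (b :: rest) s
      else if b = a then (1/2) * ∫ s in (0:ℝ)..t, EJrev rest s
      else 0

/-- Expectation of the Stratonovich iterated integral `J_α(t)`, defined by the
recursion on the last letter of the word. -/
noncomputable def EJ (α : List ℕ) (t : ℝ) : ℝ := EJrev α.reverse t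

/-- A block is `[0]` or `[m,m]` with `m ≠ 0`. -/
def IsBlock (b : List ℕ) : Prop := b = [0] ∨ ∃ m : ℕ, m ≠ 0 ∧ b = [m, m]

/-- A word is admissible if it is a concatenation of blocks. -/
def Admissible (α : List ℕ) : Prop :=
  ∃ L : List (List ℕ), (∀ b ∈ L, IsBlock b) ∧ L.flatten = α

lemma exists_ne_zero_of_integral_ne_zero {f : ℝ → ℝ} {t : ℝ}
    (h : (∫ s in (0:ℝ)..t, f s) ≠ 0) : ∃ s, f s ≠ 0 := by
  by_contra hc
  push_neg at hc
  apply h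
  have : f = fun _ => (0:ℝ) := funext hc
  rw [this]
  simp

lemma adm_of_nonzero : ∀ n : ℕ, ∀ α : List ℕ, α.length ≤ n →
    (∃ t, EJrev α t ≠ 0) → Admissible α := by
  intro n
  induction n with
  | zero =>
    intro α hlen _
    have : α = [] := List.eq_nil_of_length_eq_zero (Nat.le_zero.mp hlen)
    exact ⟨[], by simp, by simp [this]⟩
  | succ n ih =>
    intro α hlen ht
    obtain ⟨t, ht⟩ := ht
    match α with
    | [] => exact ⟨[], by simp, rfl⟩
    | [a] =>
      by_cases ha : a = 0
      · exact ⟨[[0]], by simp [IsBlock], by simp [ha]⟩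
      · simp [EJrev, ha] at ht
    | a :: b :: rest =>
      by_cases ha : a = 0
      · rw [show EJrev (a :: b :: rest) t = ∫ s in (0:ℝ)..t, EJrev (b :: rest) s
            by simp [EJrev, ha]] at ht
        obtain ⟨s, hs⟩ := exists_ne_zero_of_integral_ne_zero ht
        have hlen' : (b :: rest).length ≤ n := by
          simp at hlen ⊢; omega
        obtain ⟨L, hL, hf⟩ := ih (b :: rest) hlen' ⟨s, hs⟩
        refine ⟨[0] :: L, ?_, by simp [hf, ha]⟩
        intro c hc
        rcases List.mem_cons.mp hc with hc | hc
        · subst hc; exact Or.inl rfl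
        · exact hL c hc
      · by_cases hb : b = a
        · rw [show EJrev (a :: b :: rest) t = (1/2) * ∫ s in (0:ℝ)..t, EJrev rest s
              by simp [EJrev, ha, hb]] at ht
          have ht' : (∫ s in (0:ℝ)..t, EJrev rest s) ≠ 0 := by
            intro h0; rw [h0] at ht; simp at ht
          obtain ⟨s, hs⟩ := exists_ne_zero_of_integral_ne_zero ht'
          have hlen' : rest.length ≤ n := by
            simp at hlen ⊢; omega
          obtain ⟨L, hL, hf⟩ := ih rest hlen' ⟨s, hs⟩
          refine ⟨[a, a] :: L, ?_, by simp [hf, hb]⟩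
          intro c hc
          rcases List.mem_cons.mp hc with hc | hc
          · subst hc; exact Or.inr ⟨a, ha, rfl⟩
          · exact hL c hc
        · simp [EJrev, ha, hb] at ht

lemma adm_counts : ∀ L : List (List ℕ), (∀ b ∈ L, IsBlock b) →
    Even (L.flatten.filter (· ≠ 0)).length ∧ ∀ m : ℕ, m ≠ 0 → Even (L.flatten.count m) := by
  intro L
  induction L with
  | nil => intro _; simp
  | cons b L ih =>
    intro hb
    obtain ⟨h1, h2⟩ := ih (fun c hc => hb c (List.mem_cons_of_mem _ hc))
    have hbb := hb b List.mem_cons_self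
    constructor
    · rw [List.flatten_cons, List.filter_append, List.length_append]
      refine Even.add ?_ h1
      rcases hbb with h | ⟨m, hm, h⟩
      · simp [h]
      · simp [h, hm]
    · intro m hm
      rw [List.flatten_cons, List.count_append]
      refine Even.add ?_ (h2 m hm)
      rcases hbb with h | ⟨k, hk, h⟩
      · subst h
        simp [List.count_cons, hm.symm]
      · subst h
        by_cases hkm : k = m
        · simp [hkm, List.count_cons]
        · simp [List.count_cons, hkm]

theorem stmt14 (α : List ℕ) (h : ∃ t : ℝ, EJ α t ≠ 0) :
    Even (α.filter (· ≠ 0)).length ∧ ∀ m : ℕ, m ≠ 0 → Even (α.count m) := by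
  obtain ⟨t, ht⟩ := h
  have hadm : Admissible α.reverse :=
    adm_of_nonzero α.reverse.length α.reverse le_rfl ⟨t, ht⟩
  obtain ⟨L, hL, hf⟩ := hadm
  obtain ⟨h1, h2⟩ := adm_counts L hL
  rw [hf] at h1 h2
  constructor
  · rwa [List.filter_reverse, List.length_reverse] at h1
  · intro m hm
    have := h2 m hm
    rwa [List.count_reverse] at this
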